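/- Let x_1 < … < x_n with nondecreasing data f_1 ≤ … ≤ f_n such that m_i > 0 for all 1 ≤ i ≤ n−1, and suppose there exists K > 0 with ĥ/h_j ≤ K for all 1 ≤ j ≤ n−1. For 2 ≤ i ≤ n−1 define the Aràndiga–Yáñez value ḟ_i^{AY} = (h_i + h_{i−1})^{1/p_i}·m_{i−1}·m_i/(h_{i−1}·m_{i−1}^{p_i} + h_i·m_i^{p_i})^{1/p_i}, where p_i = max(1, log(w_i)/log(3)) and w_i = 2·max(h_{i−1}, h_i)/min(h_{i−1}, h_i). Then: (a) 0 < ḟ_i^{AY} and ḟ_i^{AY} ≤ 3·min(m_{i−1}, m_i) for every 2 ≤ i ≤ n−1, so for every 2 ≤ i ≤ n−2 the cubic Hermite interpolant on [x_i, x_{i+1}] of (f_i, ḟ_i^{AY}), (f_{i+1}, ḟ_{i+1}^{AY}) is nondecreasing; (b) if the data come from a function f that is three times continuously differentiable on [x_1, x_n] with f'(x) ≥ δ > 0 there, then the interpolant is third-order accurate: there is a constant C depending only on K, δ and bounds of the derivatives of f such that |ḟ_i^{AY} − f'(x_i)| ≤ C·ĥ² for 2 ≤ i ≤ n−1 and sup_{x∈[x_i,x_{i+1}]}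 |P_i(x) − f(x)| ≤ C·ĥ³ for 2 ≤ i ≤ n−2. -/

import Mathlib

/-- The cubic Hermite interpolant on `[xi, xip]` of the data
`(fi, di)`, `(fip, dip)`. -/
noncomputable def hermite (xi xip fi fip di dip : ℝ) : ℝ → ℝ := fun t =>
  fi + di * (t - xi)
    + (((fip - fi) / (xip - xi) - di) / (xip - xi)) * (t - xi) ^ 2
    + ((dip + di - 2 * ((fip - fi) / (xip - xi))) / (xip - xi) ^ 2)
        * (t - xi) ^ 2 * (t - xip)

/-- The exponent `pᵢ = max(1, log wᵢ / log 3)` with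
`wᵢ = 2·max(hᵢ₋₁, hᵢ)/min(hᵢ₋₁, hᵢ)`. -/
noncomputable def ayExp (hm hi : ℝ) : ℝ :=
  max 1 (Real.log (2 * max hm hi / min hm hi) / Real.log 3)

/-- The Aràndiga–Yáñez derivative value
`ḟᵢ^{AY} = (hᵢ + hᵢ₋₁)^{1/pᵢ}·mᵢ₋₁·mᵢ/(hᵢ₋₁·mᵢ₋₁^{pᵢ} + hᵢ·mᵢ^{pᵢ})^{1/pᵢ}`
(for positive divided differences). -/
noncomputable def ayVal (hm hi mm mi : ℝ) : ℝ :=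
  (hi + hm) ^ (1 / ayExp hm hi) * mm * mi /
    (hm * mm ^ ayExp hm hi + hi * mi ^ ayExp hm hi) ^ (1 / ayExp hm hi)


lemma ayExp_one_le (hm hi : ℝ) : 1 ≤ ayExp hm hi := le_max_left _ _

lemma ayExp_pos (hm hi : ℝ) : 0 < ayExp hm hi := lt_of_lt_of_le one_pos (ayExp_one_le hm hi)

lemma three_rpow_ayExp_ge {hm hi : ℝ} (h1 : 0 < hm) (h2 : 0 < hi) :
    2 * max hm hi / min hm hi ≤ (3:ℝ) ^ ayExp hm hi := by
  set w := 2 * max hm hi / min hm hi with hw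
  have hwpos : 0 < w := by
    apply div_pos (by positivity) (lt_min h1 h2)
  have hlog3 : (0:ℝ) < Real.log 3 := Real.log_pos (by norm_num)
  have hp : Real.log w / Real.log 3 ≤ ayExp hm hi := le_max_right _ _
  have : Real.log w ≤ ayExp hm hi * Real.log 3 := by
    rw [div_le_iff₀ hlog3] at hp; linarith
  calc w = Real.exp (Real.log w) := (Real.exp_log hwpos).symm
    _ ≤ Real.exp (ayExp hm hi * Real.log 3) := Real.exp_le_exp.2 this
    _ = (3:ℝ) ^ ayExp hm hi := by
        rw [Real.rpow_def_of_pos (by norm_num)]; ring_nf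

lemma sum_div_le_three_rpow {hm hi : ℝ} (h1 : 0 < hm) (h2 : 0 < hi) :
    (hm + hi) / hi ≤ (3:ℝ) ^ ayExp hm hi ∧ (hm + hi) / hm ≤ (3:ℝ) ^ ayExp hm hi := by
  have key := three_rpow_ayExp_ge h1 h2
  have hmin : 0 < min hm hi := lt_min h1 h2
  constructor
  · refine le_trans ?_ key
    rw [div_le_div_iff₀ h2 hmin]
    have h3 : hm ≤ max hm hi := le_max_left _ _
    have h4 : hi ≤ max hm hi := le_max_right _ _
    have h5 : min hm hi ≤ hi := min_le_right _ _
    nlinarith [hmin]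
  · refine le_trans ?_ key
    rw [div_le_div_iff₀ h1 hmin]
    have h3 : hm ≤ max hm hi := le_max_left _ _
    have h4 : hi ≤ max hm hi := le_max_right _ _
    have h5 : min hm hi ≤ hm := min_le_left _ _
    nlinarith [hmin]

lemma ayVal_pos {hm hi a b : ℝ} (h1 : 0 < hm) (h2 : 0 < hi) (ha : 0 < a) (hb : 0 < b) :
    0 < ayVal hm hi a b := by
  unfold ayVal
  have : (0:ℝ) < hm * a ^ ayExp hm hi + hi * b ^ ayExp hm hi := by positivity
  positivity

lemma ayVal_le_three_min {hm hi a b : ℝ} (h1 : 0 < hm) (h2 : 0 < hi) (ha : 0 < a) (hb : 0 < b) :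
    ayVal hm hi a b ≤ 3 * min a b := by
  set p := ayExp hm hi with hpdef
  have hp1 : 1 ≤ p := ayExp_one_le hm hi
  have hp0 : 0 < p := ayExp_pos hm hi
  have hip : 0 < 1 / p := by positivity
  set D := hm * a ^ p + hi * b ^ p with hD
  have hDpos : 0 < D := by positivity
  have hSpos : 0 < hm + hi := by linarith
  -- generic bound: ayVal ≤ ((hm+hi)/h')^{1/p} * c  where D ≥ h' * c'^p pairs
  have key : ∀ h' c c' : ℝ, 0 < h' → 0 < c → 0 < c' → h' * c' ^ p ≤ D →
      (h' ≤ hm + hi) → ((hm + hi)/h') ≤ (3:ℝ)^p → ayVal hm hi a b ≤ 3 * (a * b / c') := by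
    intro h' c c' hh' hc hc' hle hle2 h3
    have hDrpow : (h' * c' ^ p) ^ (1/p) ≤ D ^ (1/p) :=
      Real.rpow_le_rpow (by positivity) hle (le_of_lt hip)
    have heq : (h' * c' ^ p) ^ (1/p) = h' ^ (1/p) * c' := by
      rw [Real.mul_rpow (le_of_lt hh') (by positivity), ← Real.rpow_mul (le_of_lt hc'),
        mul_one_div, div_self (ne_of_gt hp0), Real.rpow_one]
    unfold ayVal
    rw [← hpdef]
    rw [div_le_iff₀ (by positivity)]
    have hfin : (hi + hm) ^ (1/p) ≤ 3 * h' ^ (1/p) := by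
      have : ((hm + hi)/h') ^ (1/p) ≤ ((3:ℝ)^p) ^ (1/p) :=
        Real.rpow_le_rpow (by positivity) h3 (le_of_lt hip)
      have h3eq : ((3:ℝ)^p) ^ (1/p) = 3 := by
        rw [← Real.rpow_mul (by norm_num), mul_one_div, div_self (ne_of_gt hp0), Real.rpow_one]
      rw [Real.div_rpow (by positivity) (le_of_lt hh'), h3eq, div_le_iff₀ (by positivity)] at this
      calc (hi + hm) ^ (1/p) = (hm + hi) ^ (1/p) := by ring_nf
        _ ≤ 3 * h' ^ (1/p) := this
    calc (hi + hm) ^ (1/p) * a * b ≤ (3 * h' ^ (1/p)) * a * b := by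
          apply mul_le_mul_of_nonneg_right (mul_le_mul_of_nonneg_right hfin (le_of_lt ha)) (le_of_lt hb)
      _ ≤ 3 * (a * b / c') * D ^ (1/p) := by
          rw [heq] at hDrpow
          rw [show 3 * (a * b / c') * D ^ (1/p) = 3 * a * b * D ^ (1/p) / c' by ring,
            le_div_iff₀ hc']
          nlinarith [mul_le_mul_of_nonneg_left hDrpow (show (0:ℝ) ≤ 3 * a * b by positivity)]
  rcases le_total a b with hab | hab
  · rw [min_eq_left hab]
    have := key hi b b h2 hb hb (by nlinarith [Real.rpow_natCast b 1, Real.rpow_le_rpow (le_of_lt ha) (le_refl a) (le_of_lt hp0), Real.rpow_pos_of_pos ha p]) (by linarith) (sum_div_le_three_rpow h1 h2).1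
    rw [mul_div_assoc, div_self (ne_of_gt hb), mul_one] at this
    exact this
  · rw [min_eq_right hab]
    have := key hm a a h1 ha ha (by nlinarith [Real.rpow_pos_of_pos hb p]) (by linarith) (sum_div_le_three_rpow h1 h2).2
    rw [show a * b / a = b by field_simp] at this
    exact this

lemma hermite_hasDerivAt (xi xip fi fip di dip t : ℝ) :
    HasDerivAt (hermite xi xip fi fip di dip)
      (di + (((fip - fi) / (xip - xi) - di) / (xip - xi)) * (2 * (t - xi))
        + ((dip + di - 2 * ((fip - fi) / (xip - xi))) / (xip - xi) ^ 2)
            * (2 * (t - xi) * (t - xip) + (t - xi) ^ 2)) t := by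
  have h1 : HasDerivAt (fun t : ℝ => t - xi) 1 t := (hasDerivAt_id t).sub_const xi
  have h2 : HasDerivAt (fun t : ℝ => (t - xi) ^ 2) (2 * (t - xi)) t := by
    exact (h1.pow 2).congr_deriv (by norm_num)
  have h1' : HasDerivAt (fun t : ℝ => t - xip) 1 t := (hasDerivAt_id t).sub_const xip
  have h3 : HasDerivAt (fun t : ℝ => (t - xi) ^ 2 * (t - xip))
      (2 * (t - xi) * (t - xip) + (t - xi) ^ 2) t := by
    exact (h2.mul h1').congr_deriv (by ring)
  have := (((h1.const_mul di).const_add fi).add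
      (h2.const_mul (((fip - fi) / (xip - xi) - di) / (xip - xi)))).add
      (h3.const_mul ((dip + di - 2 * ((fip - fi) / (xip - xi))) / (xip - xi) ^ 2))
  unfold hermite
  refine (this.congr_deriv (by ring)).congr_of_eventuallyEq (Filter.Eventually.of_forall fun y => ?_)
  simp only [Pi.add_apply]; ring

lemma hermite_monotoneOn {xi xip fi fip di dip : ℝ} (hx : xi < xip)
    (hd0 : 0 ≤ di) (hd1 : 0 ≤ dip) (hm : 0 < (fip - fi) / (xip - xi))
    (h3a : di ≤ 3 * ((fip - fi) / (xip - xi)))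
    (h3b : dip ≤ 3 * ((fip - fi) / (xip - xi))) :
    MonotoneOn (hermite xi xip fi fip di dip) (Set.Icc xi xip) := by
  set m := (fip - fi) / (xip - xi) with hmdef
  have hh : 0 < xip - xi := by linarith
  apply monotoneOn_of_deriv_nonneg (convex_Icc xi xip)
  · exact fun t _ => ((hermite_hasDerivAt xi xip fi fip di dip t).continuousAt).continuousWithinAt
  · intro t ht
    exact (hermite_hasDerivAt xi xip fi fip di dip t).differentiableAt.differentiableWithinAt
  · intro t ht
    rw [interior_Icc] at ht
    rw [(hermite_hasDerivAt xi xip fi fip di dip t).deriv]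
    obtain ⟨ht1, ht2⟩ := ht
    have key : di + (m - di) / (xip - xi) * (2 * (t - xi))
        + (dip + di - 2 * m) / (xip - xi) ^ 2 * (2 * (t - xi) * (t - xip) + (t - xi) ^ 2)
        = (di * ((xip - xi) - (t - xi)) * ((xip - xi) - 3 * (t - xi))
            + dip * (t - xi) * (3 * (t - xi) - 2 * (xip - xi))
            + 6 * m * (t - xi) * ((xip - xi) - (t - xi))) / (xip - xi) ^ 2 := by
      field_simp
      ring
    rw [key]
    apply div_nonneg _ (by positivity)
    have hσ0 : (0:ℝ) ≤ t - xi := by linarith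
    have hσh : t - xi ≤ xip - xi := by linarith
    have e1 : 0 ≤ m * (t - xi) ^ 2 := by positivity
    rcases le_total (t - xi) ((xip - xi)/3) with hc1 | hc1
    · nlinarith [mul_nonneg (mul_nonneg (by linarith : (0:ℝ) ≤ 3*m - dip) hσ0)
          (by linarith : (0:ℝ) ≤ 2*(xip - xi) - 3*(t - xi)),
        mul_nonneg (mul_nonneg hd0 (by linarith : (0:ℝ) ≤ (xip - xi) - (t - xi)))
          (by linarith : (0:ℝ) ≤ (xip - xi) - 3*(t - xi))]
    · rcases le_total (t - xi) (2*(xip - xi)/3) with hc2 | hc2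
      · nlinarith [mul_nonneg (mul_nonneg (by linarith : (0:ℝ) ≤ 3*m - dip) hσ0)
            (by linarith : (0:ℝ) ≤ 2*(xip - xi) - 3*(t - xi)),
          mul_nonneg (mul_nonneg (by linarith : (0:ℝ) ≤ 3*m - di)
            (by linarith : (0:ℝ) ≤ (xip - xi) - (t - xi)))
            (by linarith : (0:ℝ) ≤ 3*(t - xi) - (xip - xi)),
          mul_nonneg hm.le (sq_nonneg ((xip - xi) - 2*(t - xi)))]
      · nlinarith [mul_nonneg (mul_nonneg hd1 hσ0)
            (by linarith : (0:ℝ) ≤ 3*(t - xi) - 2*(xip - xi)),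
          mul_nonneg (mul_nonneg (by linarith : (0:ℝ) ≤ 3*m - di)
            (by linarith : (0:ℝ) ≤ (xip - xi) - (t - xi)))
            (by linarith : (0:ℝ) ≤ 3*(t - xi) - (xip - xi)),
          mul_nonneg hm.le (sq_nonneg ((xip - xi) - (t - xi)))]

lemma tay1 {s : Set ℝ} (hs : Convex ℝ s) {g g' : ℝ → ℝ}
    (hg : ∀ t ∈ s, HasDerivWithinAt g (g' t) s t) {B : ℝ}
    (hB : ∀ t ∈ s, |g' t| ≤ B) {u t : ℝ} (hu : u ∈ s) (ht : t ∈ s) :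
    |g t - g u| ≤ B * |t - u| := by
  have := hs.norm_image_sub_le_of_norm_hasDerivWithin_le hg
    (fun r hr => by rw [Real.norm_eq_abs]; exact hB r hr) hu ht
  simpa [Real.norm_eq_abs] using this

lemma tay2 {s : Set ℝ} (hs : Convex ℝ s) {g g' g'' : ℝ → ℝ}
    (hg : ∀ t ∈ s, HasDerivWithinAt g (g' t) s t)
    (hg' : ∀ t ∈ s, HasDerivWithinAt g' (g'' t) s t) {B : ℝ}
    (hB : ∀ t ∈ s, |g'' t| ≤ B) {u t : ℝ} (hu : u ∈ s) (ht : t ∈ s) :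
    |g t - g u - g' u * (t - u)| ≤ B * |t - u| ^ 2 := by
  set s' : Set ℝ := s ∩ Set.Icc (min u t) (max u t) with hs'
  have hs'c : Convex ℝ s' := hs.inter (convex_Icc _ _)
  have hus' : u ∈ s' := ⟨hu, Set.mem_Icc.2 ⟨min_le_left _ _, le_max_left _ _⟩⟩
  have hts' : t ∈ s' := ⟨ht, Set.mem_Icc.2 ⟨min_le_right _ _, le_max_right _ _⟩⟩
  have key := hs'c.norm_image_sub_le_of_norm_hasDerivWithin_le
    (f := fun r => g r - g' u * r) (f' := fun r => g' r - g' u) (C := B * |t - u|)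
    (fun r hr => ((hg r hr.1).sub ((hasDerivWithinAt_id r s).const_mul (g' u))).mono
      (Set.inter_subset_left) |>.congr_deriv (by ring))
    (fun r hr => by
      rw [Real.norm_eq_abs]
      have h1 : |g' r - g' u| ≤ B * |r - u| := tay1 hs hg' hB hu hr.1
      have h2 : |r - u| ≤ |t - u| := by
        rcases hr.2 with ⟨hr1, hr2⟩
        rw [abs_le]; constructor
        · rcases le_total u t with h | h
          · rw [abs_of_nonneg (by linarith [min_eq_left h] : (0:ℝ) ≤ t - u)]
            have := min_eq_left h; rw [this] at hr1; linarith
          · rw [abs_of_nonpos (by linarith : t - u ≤ 0)]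
            have := min_eq_right h; rw [this] at hr1; linarith
        · rcases le_total u t with h | h
          · rw [abs_of_nonneg (by linarith : (0:ℝ) ≤ t - u)]
            have := max_eq_right h; rw [this] at hr2; linarith
          · rw [abs_of_nonpos (by linarith : t - u ≤ 0)]
            have := max_eq_left h; rw [this] at hr2; linarith
      calc |g' r - g' u| ≤ B * |r - u| := h1
        _ ≤ B * |t - u| := by
            apply mul_le_mul_of_nonneg_left h2
            exact le_trans (abs_nonneg _) (hB u hu)
      ) hus' hts'
  rw [Real.norm_eq_abs, Real.norm_eq_abs] at key
  calc |g t - g u - g' u * (t - u)| = |(g t - g' u * t) - (g u - g' u * u)| := by ring_nf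
    _ ≤ B * |t - u| * |t - u| := key
    _ = B * |t - u| ^ 2 := by ring

lemma tay3 {s : Set ℝ} (hs : Convex ℝ s) {g g' g'' g''' : ℝ → ℝ}
    (hg : ∀ t ∈ s, HasDerivWithinAt g (g' t) s t)
    (hg' : ∀ t ∈ s, HasDerivWithinAt g' (g'' t) s t)
    (hg'' : ∀ t ∈ s, HasDerivWithinAt g'' (g''' t) s t) {B : ℝ}
    (hB : ∀ t ∈ s, |g''' t| ≤ B) {u t : ℝ} (hu : u ∈ s) (ht : t ∈ s) :
    |g t - g u - g' u * (t - u) - g'' u * (t - u) ^ 2 / 2| ≤ B * |t - u| ^ 2 * |t - u| := by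
  have hB0 : 0 ≤ B := le_trans (abs_nonneg _) (hB u hu)
  set s' : Set ℝ := s ∩ Set.Icc (min u t) (max u t) with hs'
  have hs'c : Convex ℝ s' := hs.inter (convex_Icc _ _)
  have hus' : u ∈ s' := ⟨hu, Set.mem_Icc.2 ⟨min_le_left _ _, le_max_left _ _⟩⟩
  have hts' : t ∈ s' := ⟨ht, Set.mem_Icc.2 ⟨min_le_right _ _, le_max_right _ _⟩⟩
  have key := hs'c.norm_image_sub_le_of_norm_hasDerivWithin_le
    (f := fun r => g r - g' u * r - g'' u * (r - u) ^ 2 / 2)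
    (f' := fun r => g' r - g' u - g'' u * (r - u)) (C := B * |t - u| ^ 2)
    (fun r hr => by
      have h1 : HasDerivWithinAt (fun r : ℝ => (r - u) ^ 2) (2 * (r - u)) s' r := by
        exact (((hasDerivWithinAt_id r s').sub_const u).pow 2).congr_deriv (by norm_num)
      exact (((hg r hr.1).mono Set.inter_subset_left).sub
        ((hasDerivWithinAt_id r s').const_mul (g' u))).sub
        ((h1.const_mul (g'' u)).div_const 2) |>.congr_deriv (by ring))
    (fun r hr => by
      rw [Real.norm_eq_abs]
      have h1 : |g' r - g' u - g'' u * (r - u)| ≤ B * |r - u| ^ 2 :=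
        tay2 hs hg' hg'' hB hu hr.1
      have h2 : |r - u| ≤ |t - u| := by
        rcases hr.2 with ⟨hr1, hr2⟩
        rw [abs_le]; constructor
        · rcases le_total u t with h | h
          · rw [abs_of_nonneg (by linarith [min_eq_left h] : (0:ℝ) ≤ t - u)]
            have := min_eq_left h; rw [this] at hr1; linarith
          · rw [abs_of_nonpos (by linarith : t - u ≤ 0)]
            have := min_eq_right h; rw [this] at hr1; linarith
        · rcases le_total u t with h | h
          · rw [abs_of_nonneg (by linarith : (0:ℝ) ≤ t - u)]
            have := max_eq_right h; rw [this] at hr2; linarith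
          · rw [abs_of_nonpos (by linarith : t - u ≤ 0)]
            have := max_eq_left h; rw [this] at hr2; linarith
      calc |g' r - g' u - g'' u * (r - u)| ≤ B * |r - u| ^ 2 := h1
        _ ≤ B * |t - u| ^ 2 := by
            apply mul_le_mul_of_nonneg_left _ hB0
            exact pow_le_pow_left₀ (abs_nonneg _) h2 2
      ) hus' hts'
  rw [Real.norm_eq_abs, Real.norm_eq_abs] at key
  calc |g t - g u - g' u * (t - u) - g'' u * (t - u) ^ 2 / 2|
      = |(g t - g' u * t - g'' u * (t - u) ^ 2 / 2) - (g u - g' u * u - g'' u * (u - u) ^ 2 / 2)| := by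
        ring_nf
    _ ≤ B * |t - u| ^ 2 * |t - u| := key

lemma core_rpow {p P y : ℝ} (hp1 : 1 ≤ p) (hpP : p ≤ P) (hy1 : -(1/2) ≤ y) (hy2 : y ≤ 1/2) :
    (1 + y) ^ p ≤ 1 + p * y + (P ^ 2 * (2:ℝ) ^ P) * y ^ 2 := by
  have hP1 : 1 ≤ P := le_trans hp1 hpP
  set Q : ℝ := P ^ 2 * (2:ℝ) ^ P with hQdef
  have hQ0 : 0 ≤ Q := by positivity
  -- second derivative bound
  have hQbound : ∀ z : ℝ, -(1/2) ≤ z → z ≤ 1/2 → p * ((p - 1) * (1 + z) ^ (p - 2)) ≤ 2 * Q := by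
    intro z hz1 hz2
    have hbase : (0:ℝ) < 1 + z := by linarith
    have hlog : |Real.log (1 + z)| ≤ Real.log 2 := by
      rw [abs_le]
      constructor
      · have h05 : Real.log ((2:ℝ)⁻¹) ≤ Real.log (1 + z) :=
          Real.log_le_log (by norm_num) (by linarith)
        rw [Real.log_inv] at h05
        linarith
      · apply Real.log_le_log hbase; linarith
    have hexp : (1 + z) ^ (p - 2) ≤ (2:ℝ) ^ P := by
      rw [Real.rpow_def_of_pos hbase, Real.rpow_def_of_pos (by norm_num)]
      apply Real.exp_le_exp.2
      have h1 : |p - 2| ≤ P := by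
        rw [abs_le]; constructor <;> nlinarith
      calc Real.log (1 + z) * (p - 2) ≤ |Real.log (1 + z) * (p - 2)| := le_abs_self _
        _ = |Real.log (1 + z)| * |p - 2| := abs_mul _ _
        _ ≤ Real.log 2 * P := by
            apply mul_le_mul hlog h1 (abs_nonneg _) (Real.log_nonneg (by norm_num))
            
    have hrp : (0:ℝ) ≤ (1 + z) ^ (p - 2) := Real.rpow_nonneg hbase.le _
    calc p * ((p - 1) * (1 + z) ^ (p - 2)) ≤ P * (P * (2:ℝ) ^ P) := by
          apply mul_le_mul (by linarith) _ (mul_nonneg (by linarith) hrp) (by linarith)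
          apply mul_le_mul (by linarith) hexp hrp (by linarith)
      _ = Q := by rw [hQdef]; ring
      _ ≤ 2 * Q := by linarith
  -- derivative facts
  have hder1 : ∀ z : ℝ, -(1/2) ≤ z → z ≤ 1/2 →
      HasDerivAt (fun y : ℝ => (1 + y) ^ p) (p * (1 + z) ^ (p - 1)) z := by
    intro z hz1 hz2
    have hbase : (0:ℝ) < 1 + z := by linarith
    have h := Real.hasDerivAt_rpow_const (x := 1 + z) (p := p) (Or.inl (ne_of_gt hbase))
    have h2 : HasDerivAt (fun y : ℝ => 1 + y) 1 z := (hasDerivAt_id z).const_add 1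
    exact (h.comp z h2).congr_deriv (by ring)
  have hder2 : ∀ z : ℝ, -(1/2) ≤ z → z ≤ 1/2 →
      HasDerivAt (fun y : ℝ => (1 + y) ^ (p - 1)) ((p - 1) * (1 + z) ^ (p - 2)) z := by
    intro z hz1 hz2
    have hbase : (0:ℝ) < 1 + z := by linarith
    have h := Real.hasDerivAt_rpow_const (x := 1 + z) (p := p - 1) (Or.inl (ne_of_gt hbase))
    have h2 : HasDerivAt (fun y : ℝ => 1 + y) 1 z := (hasDerivAt_id z).const_add 1
    have := h.comp z h2
    exact this.congr_deriv (by rw [show p - 1 - 1 = p - 2 by ring]; ring)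
  set φ : ℝ → ℝ := fun y => 1 + p * y + Q * y ^ 2 - (1 + y) ^ p with hφdef
  set ψ : ℝ → ℝ := fun y => p + Q * (2 * y) - p * (1 + y) ^ (p - 1) with hψdef
  have hφder : ∀ z : ℝ, -(1/2) ≤ z → z ≤ 1/2 → HasDerivAt φ (ψ z) z := by
    intro z hz1 hz2
    have h1 : HasDerivAt (fun y : ℝ => 1 + p * y + Q * y ^ 2)
        (p + Q * (2 * z)) z := by
      have := (((hasDerivAt_id z).const_mul p).const_add 1).add
        (((hasDerivAt_pow 2 z)).const_mul Q)
      exact this.congr_deriv (by norm_num <;> ring)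
    exact h1.sub (hder1 z hz1 hz2)
  have hψder : ∀ z : ℝ, -(1/2) ≤ z → z ≤ 1/2 →
      HasDerivAt ψ (2 * Q - p * ((p - 1) * (1 + z) ^ (p - 2))) z := by
    intro z hz1 hz2
    have h1 : HasDerivAt (fun y : ℝ => p + Q * (2 * y)) (2 * Q) z := by
      have := (((hasDerivAt_id z).const_mul 2).const_mul Q).const_add p
      simpa [mul_comm, mul_assoc] using this
    exact h1.sub ((hder2 z hz1 hz2).const_mul p)
  -- ψ is monotone on [-1/2,1/2], ψ 0 = 0
  have hψmono : MonotoneOn ψ (Set.Icc (-(1/2)) (1/2)) := by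
    apply monotoneOn_of_deriv_nonneg (convex_Icc _ _)
    · intro z hz
      exact (hψder z hz.1 hz.2).continuousAt.continuousWithinAt
    · intro z hz
      rw [interior_Icc] at hz
      exact (hψder z hz.1.le hz.2.le).differentiableAt.differentiableWithinAt
    · intro z hz
      rw [interior_Icc] at hz
      rw [(hψder z hz.1.le hz.2.le).deriv]
      have := hQbound z hz.1.le hz.2.le
      linarith
  have hψ0 : ψ 0 = 0 := by
    simp [hψdef, Real.one_rpow]
  have hφ0 : φ 0 = 0 := by
    simp [hφdef, Real.one_rpow]
  have key : 0 ≤ φ y := by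
    rcases le_total 0 y with hy | hy
    · have hmono : MonotoneOn φ (Set.Icc (0:ℝ) (1/2)) := by
        apply monotoneOn_of_deriv_nonneg (convex_Icc _ _)
        · intro z hz
          exact (hφder z (by linarith [hz.1]) hz.2).continuousAt.continuousWithinAt
        · intro z hz
          rw [interior_Icc] at hz
          exact (hφder z (by linarith [hz.1.le]) hz.2.le).differentiableAt.differentiableWithinAt
        · intro z hz
          rw [interior_Icc] at hz
          rw [(hφder z (by linarith [hz.1.le]) hz.2.le).deriv]
          have := hψmono (Set.mem_Icc.2 ⟨by norm_num, by norm_num⟩)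
            (Set.mem_Icc.2 ⟨by linarith [hz.1.le], hz.2.le⟩) hz.1.le
          rw [hψ0] at this
          exact this
      have := hmono (Set.mem_Icc.2 ⟨le_refl 0, by norm_num⟩) (Set.mem_Icc.2 ⟨hy, hy2⟩) hy
      rw [hφ0] at this
      exact this
    · have hmono : AntitoneOn φ (Set.Icc (-(1/2):ℝ) 0) := by
        apply antitoneOn_of_deriv_nonpos (convex_Icc _ _)
        · intro z hz
          exact (hφder z hz.1 (by linarith [hz.2])).continuousAt.continuousWithinAt
        · intro z hz
          rw [interior_Icc] at hz
          exact (hφder z hz.1.le (by linarith [hz.2.le])).differentiableAt.differentiableWithinAt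
        · intro z hz
          rw [interior_Icc] at hz
          rw [(hφder z hz.1.le (by linarith [hz.2.le])).deriv]
          have := hψmono (Set.mem_Icc.2 ⟨hz.1.le, by linarith [hz.2.le]⟩)
            (Set.mem_Icc.2 ⟨by norm_num, by norm_num⟩) hz.2.le
          rw [hψ0] at this
          linarith
      have := hmono (Set.mem_Icc.2 ⟨hy1, hy⟩) (Set.mem_Icc.2 ⟨by norm_num, le_refl 0⟩) hy
      rw [hφ0] at this
      exact this
  have : φ y = 1 + p * y + Q * y ^ 2 - (1 + y) ^ p := rfl
  linarith [key]

lemma pm_lower {p θ a b : ℝ} (hp1 : 1 ≤ p) (hθ0 : 0 ≤ θ) (hθ1 : θ ≤ 1)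
    (ha : 0 ≤ a) (hb : 0 ≤ b) :
    θ * a + (1 - θ) * b ≤ (θ * a ^ p + (1 - θ) * b ^ p) ^ (1 / p) := by
  have := Real.arith_mean_le_rpow_mean (s := Finset.univ) (w := ![θ, 1 - θ]) (z := ![a, b])
    (by intro i _; fin_cases i <;> simp [hθ0] <;> linarith)
    (by simp [Fin.sum_univ_two])
    (by intro i _; fin_cases i <;> simp [ha, hb])
    hp1
  simpa [Fin.sum_univ_two] using this

set_option maxHeartbeats 2000000 in
lemma pm_upper_aux {p P θ a b : ℝ} (hp1 : 1 ≤ p) (hpP : p ≤ P) (hθ0 : 0 ≤ θ) (hθ1 : θ ≤ 1)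
    (ha : 0 < a) (hb : 0 < b) (hba : b ≤ a) :
    (θ * a ^ p + (1 - θ) * b ^ p) ^ (1 / p) ≤
      θ * a + (1 - θ) * b + (P ^ 2 * (2:ℝ) ^ P + 2) * (a - b) ^ 2 / b := by
  have hp0 : 0 < p := by linarith
  obtain ⟨Q, hQdef⟩ : ∃ Q : ℝ, Q = P ^ 2 * (2:ℝ) ^ P := ⟨_, rfl⟩
  rw [← hQdef]
  have hQ0 : 0 ≤ Q := by rw [hQdef]; positivity
  obtain ⟨A, hAdef⟩ : ∃ A : ℝ, A = θ * a + (1 - θ) * b := ⟨_, rfl⟩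
  rw [← hAdef]
  have hbA : b ≤ A := by rw [hAdef]; nlinarith
  have hAa : A ≤ a := by rw [hAdef]; nlinarith
  have hA0 : 0 < A := lt_of_lt_of_le hb hbA
  have hsum_nonneg : 0 ≤ θ * a ^ p + (1 - θ) * b ^ p := by
    have h1 := Real.rpow_nonneg ha.le p
    have h2 := Real.rpow_nonneg hb.le p
    nlinarith
  have hppow : (A ^ p) ^ (1/p) = A := by
    rw [← Real.rpow_mul hA0.le, mul_one_div, div_self (ne_of_gt hp0), Real.rpow_one]
  rcases le_total (a - b) (b / 2) with hsmall | hbig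
  · -- small relative gap
    obtain ⟨D, hDdef⟩ : ∃ D : ℝ, D = (a - b) / A := ⟨_, rfl⟩
    obtain ⟨xa, hxa⟩ : ∃ xa : ℝ, xa = (1 - θ) * D := ⟨_, rfl⟩
    obtain ⟨xb, hxb⟩ : ∃ xb : ℝ, xb = -(θ * D) := ⟨_, rfl⟩
    have hD0 : 0 ≤ D := by rw [hDdef]; exact div_nonneg (by linarith) hA0.le
    have hAD : A * D = a - b := by
      rw [hDdef]; field_simp
    have hDhalf : D ≤ 1/2 := by
      have h1 : A * D ≤ A * (1/2) := by rw [hAD]; nlinarith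
      exact le_of_mul_le_mul_left h1 hA0
    have haA : a = A * (1 + xa) := by
      calc a = A + (1 - θ) * (A * D) := by rw [hAD, hAdef]; ring
        _ = A * (1 + xa) := by rw [hxa]; ring
    have hbB : b = A * (1 + xb) := by
      calc b = A + -(θ * (A * D)) := by rw [hAD, hAdef]; ring
        _ = A * (1 + xb) := by rw [hxb]; ring
    have hxa0 : 0 ≤ xa := by rw [hxa]; exact mul_nonneg (by linarith) hD0
    have hxa2 : xa ≤ 1/2 := by
      rw [hxa]; nlinarith
    have hxb2 : -(1/2) ≤ xb := by
      rw [hxb]; nlinarith [mul_nonneg hθ0 hD0]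
    have hxb0 : xb ≤ 0 := by rw [hxb]; simp [mul_nonneg hθ0 hD0]
    have hca := core_rpow hp1 hpP (by linarith : -(1/2) ≤ xa) hxa2
    have hcb := core_rpow hp1 hpP hxb2 (by linarith : xb ≤ 1/2)
    rw [← hQdef] at hca hcb
    have hzero : p * (θ * xa + (1 - θ) * xb) = 0 := by
      rw [hxa, hxb]; ring
    have hquad : θ * xa ^ 2 + (1 - θ) * xb ^ 2 ≤ D ^ 2 := by
      rw [hxa, hxb]
      have h1 : θ * (1 - θ) ≤ 1 := by nlinarith [sq_nonneg θ]
      calc θ * ((1 - θ) * D) ^ 2 + (1 - θ) * (-(θ * D)) ^ 2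
          = (θ * (1 - θ)) * D ^ 2 := by ring
        _ ≤ 1 * D ^ 2 := mul_le_mul_of_nonneg_right h1 (sq_nonneg D)
        _ = D ^ 2 := one_mul _
    have hap : a ^ p = A ^ p * (1 + xa) ^ p := by
      rw [haA, Real.mul_rpow hA0.le (by linarith)]
    have hbp : b ^ p = A ^ p * (1 + xb) ^ p := by
      rw [hbB, Real.mul_rpow hA0.le (by linarith)]
    have hApos : 0 < A ^ p := Real.rpow_pos_of_pos hA0 p
    have e1 : θ * (1 + xa) ^ p ≤ θ * (1 + p * xa + Q * xa ^ 2) :=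
      mul_le_mul_of_nonneg_left hca hθ0
    have e2 : (1 - θ) * (1 + xb) ^ p ≤ (1 - θ) * (1 + p * xb + Q * xb ^ 2) :=
      mul_le_mul_of_nonneg_left hcb (by linarith)
    have e3 : θ * (1 + xa) ^ p + (1 - θ) * (1 + xb) ^ p ≤ 1 + Q * D ^ 2 := by
      nlinarith [mul_le_mul_of_nonneg_left hquad hQ0]
    have step1 : θ * a ^ p + (1 - θ) * b ^ p ≤ A ^ p * (1 + Q * D ^ 2) := by
      rw [hap, hbp]
      nlinarith [mul_le_mul_of_nonneg_left e3 hApos.le]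
    have step2 : (θ * a ^ p + (1 - θ) * b ^ p) ^ (1/p) ≤ A * (1 + Q * D ^ 2) := by
      calc (θ * a ^ p + (1 - θ) * b ^ p) ^ (1/p)
          ≤ (A ^ p * (1 + Q * D ^ 2)) ^ (1/p) :=
            Real.rpow_le_rpow hsum_nonneg step1 (by positivity)
        _ = A * (1 + Q * D ^ 2) ^ (1/p) := by
            rw [Real.mul_rpow hApos.le (by positivity), hppow]
        _ ≤ A * (1 + Q * D ^ 2) := by
            apply mul_le_mul_of_nonneg_left _ hA0.le
            calc (1 + Q * D ^ 2) ^ (1/p) ≤ (1 + Q * D ^ 2) ^ (1:ℝ) := by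
                  apply Real.rpow_le_rpow_of_exponent_le (by nlinarith)
                  rw [div_le_one hp0]; exact hp1
              _ = 1 + Q * D ^ 2 := Real.rpow_one _
    have hfin : A * (1 + Q * D ^ 2) = A + Q * (a - b) ^ 2 / A := by
      rw [hDdef]; field_simp
    have hfin2 : A + Q * (a - b) ^ 2 / A ≤ A + (Q + 2) * (a - b) ^ 2 / b := by
      have h1 : Q * (a - b) ^ 2 / A ≤ Q * (a - b) ^ 2 / b := by
        gcongr
      have h2 : Q * (a - b) ^ 2 / b ≤ (Q + 2) * (a - b) ^ 2 / b := by
        gcongr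
        linarith
      linarith
    rw [hfin] at step2
    exact le_trans step2 hfin2
  · -- big gap
    have hbpap : b ^ p ≤ a ^ p := Real.rpow_le_rpow hb.le hba hp0.le
    have h1 : θ * a ^ p + (1 - θ) * b ^ p ≤ a ^ p := by nlinarith
    have h2 : (θ * a ^ p + (1 - θ) * b ^ p) ^ (1/p) ≤ (a ^ p) ^ (1/p) :=
      Real.rpow_le_rpow hsum_nonneg h1 (by positivity)
    have h3 : (a ^ p) ^ (1/p) = a := by
      rw [← Real.rpow_mul ha.le, mul_one_div, div_self (ne_of_gt hp0), Real.rpow_one]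
    rw [h3] at h2
    have key : a - A ≤ 2 * (a - b) ^ 2 / b := by
      rw [hAdef, le_div_iff₀ hb]; nlinarith
    have key2 : 2 * (a - b) ^ 2 / b ≤ (Q + 2) * (a - b) ^ 2 / b := by
      gcongr; linarith
    linarith

lemma pm_upper {p P θ a b : ℝ} (hp1 : 1 ≤ p) (hpP : p ≤ P) (hθ0 : 0 ≤ θ) (hθ1 : θ ≤ 1)
    (ha : 0 < a) (hb : 0 < b) :
    (θ * a ^ p + (1 - θ) * b ^ p) ^ (1 / p) ≤
      θ * a + (1 - θ) * b + (P ^ 2 * (2:ℝ) ^ P + 2) * (a - b) ^ 2 / min a b := by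
  rcases le_total b a with hba | hab
  · rw [min_eq_right hba]
    exact pm_upper_aux hp1 hpP hθ0 hθ1 ha hb hba
  · rw [min_eq_left hab]
    have h := pm_upper_aux (θ := 1 - θ) (a := b) (b := a) hp1 hpP (by linarith) (by linarith)
      hb ha hab
    calc (θ * a ^ p + (1 - θ) * b ^ p) ^ (1/p)
        = ((1 - θ) * b ^ p + (1 - (1 - θ)) * a ^ p) ^ (1/p) := by ring_nf
      _ ≤ (1 - θ) * b + (1 - (1 - θ)) * a + (P ^ 2 * (2:ℝ) ^ P + 2) * (b - a) ^ 2 / a := h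
      _ = θ * a + (1 - θ) * b + (P ^ 2 * (2:ℝ) ^ P + 2) * (a - b) ^ 2 / a := by ring_nf

lemma ayVal_eq {hm hi a b : ℝ} (hhm : 0 < hm) (hhi : 0 < hi) (ha : 0 < a) (hb : 0 < b) :
    ayVal hm hi a b = a * b /
      ((hm / (hm + hi)) * a ^ ayExp hm hi
        + (1 - hm / (hm + hi)) * b ^ ayExp hm hi) ^ (1 / ayExp hm hi) := by
  have hS : 0 < hm + hi := by linarith
  set p := ayExp hm hi with hp
  have hθ1 : 1 - hm / (hm + hi) = hi / (hm + hi) := by field_simp; ring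
  have hinner : 0 < hm / (hm + hi) * a ^ p + (1 - hm / (hm + hi)) * b ^ p := by
    rw [hθ1]
    positivity
  have h1 : hm * a ^ p + hi * b ^ p
      = (hm + hi) * (hm / (hm + hi) * a ^ p + (1 - hm / (hm + hi)) * b ^ p) := by
    rw [hθ1]; field_simp
  unfold ayVal
  rw [← hp, h1, Real.mul_rpow hS.le hinner.le]
  have hSrpow : (0:ℝ) < (hm + hi) ^ (1/p) := Real.rpow_pos_of_pos hS _
  have hXrpow : (0:ℝ) < (hm / (hm + hi) * a ^ p + (1 - hm / (hm + hi)) * b ^ p) ^ (1/p) :=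
    Real.rpow_pos_of_pos hinner _
  rw [add_comm hi hm]
  field_simp

set_option maxHeartbeats 2000000 in
lemma df_acc {hm hi a b F s M δ H P : ℝ}
    (hhm : 0 < hm) (hhi : 0 < hi) (hmH : hm ≤ H) (hiH : hi ≤ H)
    (hδ : 0 < δ) (hM : 0 ≤ M)
    (hFδ : δ ≤ F) (haδ : δ ≤ a) (hbδ : δ ≤ b)
    (ha2 : |a - F| ≤ M * hm) (hb2 : |b - F| ≤ M * hi)
    (ha3 : |a - F + hm / 2 * s| ≤ M * hm ^ 2) (hb3 : |b - F - hi / 2 * s| ≤ M * hi ^ 2)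
    (hp1 : 1 ≤ P) (hpP : ayExp hm hi ≤ P) :
    |ayVal hm hi a b - F| ≤
      (2 * M + (2 + 6 * (P ^ 2 * (2:ℝ) ^ P + 2)) * M ^ 2 / δ) * H ^ 2 := by
  have hS : 0 < hm + hi := by linarith
  have hH : 0 < H := lt_of_lt_of_le hhm hmH
  have ha : 0 < a := lt_of_lt_of_le hδ haδ
  have hb : 0 < b := lt_of_lt_of_le hδ hbδ
  have hF : 0 < F := lt_of_lt_of_le hδ hFδ
  set p := ayExp hm hi with hpdef
  have hp1' : 1 ≤ p := ayExp_one_le hm hi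
  obtain ⟨CP, hCP⟩ : ∃ CP : ℝ, CP = P ^ 2 * (2:ℝ) ^ P + 2 := ⟨_, rfl⟩
  have hCP2 : 2 ≤ CP := by
    rw [hCP]
    have : (0:ℝ) ≤ P ^ 2 * (2:ℝ) ^ P := by positivity
    linarith
  obtain ⟨θ, hθdef⟩ : ∃ θ : ℝ, θ = hm / (hm + hi) := ⟨_, rfl⟩
  have hθ0 : 0 ≤ θ := by rw [hθdef]; positivity
  have hθle : θ ≤ 1 := by
    rw [hθdef, div_le_one hS]; linarith
  obtain ⟨A, hAdef⟩ : ∃ A : ℝ, A = θ * a + (1 - θ) * b := ⟨_, rfl⟩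
  obtain ⟨Mp, hMpdef⟩ : ∃ Mp : ℝ, Mp = (θ * a ^ p + (1 - θ) * b ^ p) ^ (1/p) := ⟨_, rfl⟩
  have hd : ayVal hm hi a b = a * b / Mp := by
    rw [ayVal_eq hhm hhi ha hb, hMpdef, hθdef, ← hpdef]
  have hAMp : A ≤ Mp := by
    rw [hAdef, hMpdef]; exact pm_lower hp1' hθ0 hθle ha.le hb.le
  have hMpup : Mp ≤ A + CP * (a - b) ^ 2 / min a b := by
    rw [hAdef, hMpdef, hCP]; exact pm_upper hp1' hpP hθ0 hθle ha hb
  have hminδ : δ ≤ min a b := le_min haδ hbδ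
  have hAδ : δ ≤ A := by
    rw [hAdef]
    linarith [mul_nonneg hθ0 (sub_nonneg.2 haδ),
      mul_nonneg (by linarith : (0:ℝ) ≤ 1 - θ) (sub_nonneg.2 hbδ)]
  have hMp0 : 0 < Mp := lt_of_lt_of_le hδ (le_trans hAδ hAMp)
  -- numerator bound
  have hid : a * b - F * A
      = F * ((hi * (a - F + hm/2 * s) + hm * (b - F - hi/2 * s)) / (hm + hi))
        + (a - F) * (b - F) := by
    rw [hAdef, hθdef]; field_simp; ring
  have habs1 : |hi * (a - F + hm/2 * s) + hm * (b - F - hi/2 * s)| ≤ M * hm * hi * (hm + hi) := by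
    calc |hi * (a - F + hm/2 * s) + hm * (b - F - hi/2 * s)|
        ≤ |hi * (a - F + hm/2 * s)| + |hm * (b - F - hi/2 * s)| := abs_add_le _ _
      _ = hi * |a - F + hm/2 * s| + hm * |b - F - hi/2 * s| := by
          rw [abs_mul, abs_mul, abs_of_pos hhi, abs_of_pos hhm]
      _ ≤ hi * (M * hm ^ 2) + hm * (M * hi ^ 2) := by
          apply add_le_add
          · exact mul_le_mul_of_nonneg_left ha3 hhi.le
          · exact mul_le_mul_of_nonneg_left hb3 hhm.le
      _ = M * hm * hi * (hm + hi) := by ring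
  have hnum1 : |a * b - F * A| ≤ F * M * H ^ 2 + M ^ 2 * H ^ 2 := by
    rw [hid]
    calc |F * ((hi * (a - F + hm/2 * s) + hm * (b - F - hi/2 * s)) / (hm + hi))
          + (a - F) * (b - F)|
        ≤ |F * ((hi * (a - F + hm/2 * s) + hm * (b - F - hi/2 * s)) / (hm + hi))|
          + |(a - F) * (b - F)| := abs_add_le _ _
      _ = F * (|hi * (a - F + hm/2 * s) + hm * (b - F - hi/2 * s)| / (hm + hi))
          + |a - F| * |b - F| := by
          rw [abs_mul, abs_mul, abs_of_pos hF, abs_div, abs_of_pos hS]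
      _ ≤ F * ((M * hm * hi * (hm + hi)) / (hm + hi)) + (M * hm) * (M * hi) := by
          apply add_le_add
          · apply mul_le_mul_of_nonneg_left _ hF.le
            exact (div_le_div_iff_of_pos_right hS).2 habs1
          · exact mul_le_mul ha2 hb2 (abs_nonneg _) (by positivity)
      _ = (F * M) * (hm * hi) + (M * M) * (hm * hi) := by
          field_simp
      _ ≤ F * M * H ^ 2 + M ^ 2 * H ^ 2 := by
          have h1 : hm * hi ≤ H ^ 2 := by
            calc hm * hi ≤ H * H := mul_le_mul hmH hiH hhi.le hH.le
              _ = H ^ 2 := (sq H).symm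
          have h2 := mul_le_mul_of_nonneg_left h1 (mul_nonneg hF.le hM)
          have h3 := mul_le_mul_of_nonneg_left h1 (mul_nonneg hM hM)
          calc (F * M) * (hm * hi) + (M * M) * (hm * hi)
              ≤ (F * M) * H ^ 2 + (M * M) * H ^ 2 := add_le_add h2 h3
            _ = F * M * H ^ 2 + M ^ 2 * H ^ 2 := by ring
  have h9 : (0:ℝ) ≤ M ^ 2 * H ^ 2 / δ := by positivity
  rcases le_total F (4 * M * H) with hcase | hcase
  · -- crude regime
    have hsum_nonneg : 0 ≤ θ * a ^ p + (1 - θ) * b ^ p := by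
      linarith [mul_nonneg hθ0 (Real.rpow_nonneg ha.le p),
        mul_nonneg (by linarith : (0:ℝ) ≤ 1 - θ) (Real.rpow_nonneg hb.le p)]
    have hmax0 : 0 < max a b := lt_of_lt_of_le ha (le_max_left _ _)
    have hMpmax : Mp ≤ max a b := by
      rw [hMpdef]
      have hp0 : (0:ℝ) < p := ayExp_pos hm hi
      have h2 : a ^ p ≤ (max a b) ^ p :=
        Real.rpow_le_rpow ha.le (le_max_left _ _) hp0.le
      have h3 : b ^ p ≤ (max a b) ^ p :=
        Real.rpow_le_rpow hb.le (le_max_right _ _) hp0.le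
      have h1 : θ * a ^ p + (1 - θ) * b ^ p ≤ (max a b) ^ p := by
        linarith [mul_le_mul_of_nonneg_left h2 hθ0,
          mul_le_mul_of_nonneg_left h3 (by linarith : (0:ℝ) ≤ 1 - θ)]
      calc (θ * a ^ p + (1 - θ) * b ^ p) ^ (1/p)
          ≤ ((max a b) ^ p) ^ (1/p) :=
            Real.rpow_le_rpow hsum_nonneg h1 (one_div_nonneg.2 hp0.le)
        _ = max a b := by
            rw [← Real.rpow_mul hmax0.le, mul_one_div,
              div_self (ne_of_gt (ayExp_pos hm hi)), Real.rpow_one]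
    have hAmin : min a b ≤ A := by
      rw [hAdef]
      linarith [mul_nonneg hθ0 (sub_nonneg.2 (min_le_left a b)),
        mul_nonneg (by linarith : (0:ℝ) ≤ 1 - θ) (sub_nonneg.2 (min_le_right a b))]
    have hminMp : min a b ≤ Mp := le_trans hAmin hAMp
    have hdlo : min a b ≤ a * b / Mp := by
      rw [le_div_iff₀ hMp0]
      calc min a b * Mp ≤ min a b * max a b := by
            apply mul_le_mul_of_nonneg_left hMpmax (le_trans hδ.le hminδ)
        _ = a * b := min_mul_max a b
    have hdhi : a * b / Mp ≤ max a b := by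
      rw [div_le_iff₀ hMp0]
      calc a * b = min a b * max a b := (min_mul_max a b).symm
        _ ≤ Mp * max a b := mul_le_mul_of_nonneg_right hminMp hmax0.le
        _ = max a b * Mp := by ring
    have hd1 : |a * b / Mp - F| ≤ M * H := by
      have e1 := abs_le.1 ha2
      have e2 := abs_le.1 hb2
      have hMhm : M * hm ≤ M * H := mul_le_mul_of_nonneg_left hmH hM
      have hMhi : M * hi ≤ M * H := mul_le_mul_of_nonneg_left hiH hM
      rw [abs_le]
      constructor
      · have : F - M * H ≤ min a b := by
          apply le_min <;> linarith
        linarith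
      · have : max a b ≤ F + M * H := by
          apply max_le <;> linarith
        linarith
    have final : M * H ≤ 4 * M ^ 2 * H ^ 2 / δ := by
      rw [le_div_iff₀ hδ]
      calc M * H * δ = (M * H) * δ := by ring
        _ ≤ (M * H) * (4 * M * H) :=
            mul_le_mul_of_nonneg_left (le_trans hFδ hcase) (mul_nonneg hM hH.le)
        _ = 4 * M ^ 2 * H ^ 2 := by ring
    rw [hd]
    calc |a * b / Mp - F| ≤ M * H := hd1
      _ ≤ 4 * M ^ 2 * H ^ 2 / δ := final
      _ = 4 * (M ^ 2 * H ^ 2 / δ) := by ring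
      _ ≤ (2 + 6 * CP) * (M ^ 2 * H ^ 2 / δ) :=
          mul_le_mul_of_nonneg_right (by linarith) h9
      _ ≤ 2 * (M * H ^ 2) + (2 + 6 * CP) * (M ^ 2 * H ^ 2 / δ) :=
          le_add_of_nonneg_left (by positivity)
      _ = (2 * M + (2 + 6 * CP) * M ^ 2 / δ) * H ^ 2 := by ring
      _ = (2 * M + (2 + 6 * (P ^ 2 * (2:ℝ) ^ P + 2)) * M ^ 2 / δ) * H ^ 2 := by rw [hCP]
  · -- fine regime
    have haF : |a - F| ≤ M * H := le_trans ha2 (mul_le_mul_of_nonneg_left hmH hM)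
    have hbF : |b - F| ≤ M * H := le_trans hb2 (mul_le_mul_of_nonneg_left hiH hM)
    have e1 := abs_le.1 haF
    have e2 := abs_le.1 hbF
    have hmin34 : 3/4 * F ≤ min a b := by
      apply le_min <;> linarith
    have hAmin : min a b ≤ A := by
      rw [hAdef]
      linarith [mul_nonneg hθ0 (sub_nonneg.2 (min_le_left a b)),
        mul_nonneg (by linarith : (0:ℝ) ≤ 1 - θ) (sub_nonneg.2 (min_le_right a b))]
    have hMp34 : 3/4 * F ≤ Mp := le_trans (le_trans hmin34 hAmin) hAMp
    have hδMp : δ ≤ Mp := le_trans hAδ hAMp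
    have hsq : (a - b) ^ 2 ≤ 4 * M ^ 2 * H ^ 2 := by
      have h1 : (a - b) ^ 2 ≤ (2 * (M * H)) ^ 2 :=
        sq_le_sq' (by linarith) (by linarith)
      calc (a - b) ^ 2 ≤ (2 * (M * H)) ^ 2 := h1
        _ = 4 * M ^ 2 * H ^ 2 := by ring
    have hnum2 : |a * b - F * Mp| ≤ F * M * H ^ 2 + M ^ 2 * H ^ 2
        + F * (CP * (a - b) ^ 2 / min a b) := by
      calc |a * b - F * Mp| = |(a * b - F * A) + (F * A - F * Mp)| := by ring_nf
        _ ≤ |a * b - F * A| + |F * A - F * Mp| := abs_add_le _ _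
        _ ≤ (F * M * H ^ 2 + M ^ 2 * H ^ 2) + F * (CP * (a - b) ^ 2 / min a b) := by
            apply add_le_add hnum1
            rw [show F * A - F * Mp = -(F * (Mp - A)) by ring, abs_neg,
              abs_of_nonneg (mul_nonneg hF.le (by linarith))]
            apply mul_le_mul_of_nonneg_left _ hF.le
            linarith [hMpup]
    have hterm3 : F * (CP * (a - b) ^ 2 / min a b) ≤ 6 * CP * M ^ 2 * H ^ 2 := by
      have hCP0 : (0:ℝ) ≤ CP := by linarith
      have h34F : (0:ℝ) < 3/4 * F := by linarith
      have hstep : CP * (a - b) ^ 2 / min a b ≤ CP * (4 * M ^ 2 * H ^ 2) / (3/4 * F) := by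
        gcongr
      calc F * (CP * (a - b) ^ 2 / min a b)
          ≤ F * (CP * (4 * M ^ 2 * H ^ 2) / (3/4 * F)) :=
            mul_le_mul_of_nonneg_left hstep hF.le
        _ = 16/3 * CP * M ^ 2 * H ^ 2 := by field_simp; ring
        _ = 16/3 * (CP * M ^ 2 * H ^ 2) := by ring
        _ ≤ 6 * (CP * M ^ 2 * H ^ 2) := by
            apply mul_le_mul_of_nonneg_right (by norm_num)
            have h0 := mul_nonneg (mul_nonneg hCP0 (mul_nonneg hM hM)) (sq_nonneg H)
            calc (0:ℝ) ≤ CP * (M * M) * H ^ 2 := h0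
              _ = CP * M ^ 2 * H ^ 2 := by ring
        _ = 6 * CP * M ^ 2 * H ^ 2 := by ring
    have hde : a * b / Mp - F = (a * b - F * Mp) / Mp := by
      field_simp
    rw [hd, hde, abs_div, abs_of_pos hMp0]
    have hnum3 : |a * b - F * Mp| ≤ F * M * H ^ 2 + (M ^ 2 * H ^ 2 + 6 * CP * M ^ 2 * H ^ 2) := by
      linarith [hnum2, hterm3]
    calc |a * b - F * Mp| / Mp
        ≤ (F * M * H ^ 2 + (M ^ 2 * H ^ 2 + 6 * CP * M ^ 2 * H ^ 2)) / Mp := by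
          exact (div_le_div_iff_of_pos_right hMp0).2 hnum3
      _ ≤ F * M * H ^ 2 / (3/4 * F) + (M ^ 2 * H ^ 2 + 6 * CP * M ^ 2 * H ^ 2) / δ := by
          rw [add_div]
          apply add_le_add
          · gcongr
          · gcongr
      _ = 4/3 * (M * H ^ 2) + (1 + 6 * CP) * (M ^ 2 * H ^ 2 / δ) := by
          field_simp
      _ ≤ 2 * M * H ^ 2 + (2 + 6 * CP) * (M ^ 2 * H ^ 2 / δ) := by
          have k1 : 4/3 * (M * H ^ 2) ≤ 2 * (M * H ^ 2) :=
            mul_le_mul_of_nonneg_right (by norm_num) (mul_nonneg hM (sq_nonneg H))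
          have k2 : (1 + 6 * CP) * (M ^ 2 * H ^ 2 / δ) ≤ (2 + 6 * CP) * (M ^ 2 * H ^ 2 / δ) :=
            mul_le_mul_of_nonneg_right (by linarith) h9
          calc 4/3 * (M * H ^ 2) + (1 + 6 * CP) * (M ^ 2 * H ^ 2 / δ)
              ≤ 2 * (M * H ^ 2) + (2 + 6 * CP) * (M ^ 2 * H ^ 2 / δ) := add_le_add k1 k2
            _ = 2 * M * H ^ 2 + (2 + 6 * CP) * (M ^ 2 * H ^ 2 / δ) := by ring
      _ = (2 * M + (2 + 6 * CP) * M ^ 2 / δ) * H ^ 2 := by ring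
      _ = (2 * M + (2 + 6 * (P ^ 2 * (2:ℝ) ^ P + 2)) * M ^ 2 / δ) * H ^ 2 := by rw [hCP]

set_option maxHeartbeats 1000000 in
lemma hermite_close {xi xip H M E Fi Fip s di dip : ℝ} {f : ℝ → ℝ}
    (hx : xi < xip) (hH : xip - xi ≤ H) (hM : 0 ≤ M) (hE : 0 ≤ E)
    (htay : ∀ t ∈ Set.Icc xi xip,
      |f t - f xi - Fi * (t - xi) - s * (t - xi) ^ 2 / 2| ≤ M * (xip - xi) ^ 3)
    (hrho : |Fip - Fi - s * (xip - xi)| ≤ M * (xip - xi) ^ 2)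
    (hdi : |di - Fi| ≤ E * H ^ 2) (hdip : |dip - Fip| ≤ E * H ^ 2) :
    ∀ t ∈ Set.Icc xi xip,
      |hermite xi xip (f xi) (f xip) di dip t - f t| ≤ (8 * M + 4 * E) * H ^ 3 := by
  intro t ht
  obtain ⟨ht1, ht2⟩ := ht
  have hh : 0 < xip - xi := by linarith
  have hH0 : 0 < H := lt_of_lt_of_le hh hH
  set h : ℝ := xip - xi with hhdef
  set σ : ℝ := t - xi with hσdef
  have hσ0 : 0 ≤ σ := by rw [hσdef]; linarith
  have hσh : σ ≤ h := by rw [hσdef, hhdef]; linarith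
  set e0 : ℝ := di - Fi with he0
  set e1 : ℝ := dip - Fip with he1
  set ρ : ℝ := Fip - Fi - s * h with hρ
  set r : ℝ := (f xip - f xi) / h - Fi - s * h / 2 with hr
  set G : ℝ := f t - f xi - Fi * σ - s * σ ^ 2 / 2 with hG
  have hGb : |G| ≤ M * h ^ 3 := htay t ⟨ht1, ht2⟩
  have hGipb : |f xip - f xi - Fi * h - s * h ^ 2 / 2| ≤ M * h ^ 3 :=
    htay xip ⟨hx.le, le_refl _⟩
  have hrb : |r| ≤ M * h ^ 2 := by
    rw [hr]
    rw [show (f xip - f xi) / h - Fi - s * h / 2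
      = (f xip - f xi - Fi * h - s * h ^ 2 / 2) / h by field_simp]
    rw [abs_div, abs_of_pos hh, div_le_iff₀ hh]
    calc |f xip - f xi - Fi * h - s * h ^ 2 / 2| ≤ M * h ^ 3 := hGipb
      _ = M * h ^ 2 * h := by ring
  have hid : hermite xi xip (f xi) (f xip) di dip t - f t
      = e0 * σ + ((r - e0) / h) * σ ^ 2 + ((ρ + e0 + e1 - 2 * r) / h ^ 2) * (σ ^ 2 * (σ - h)) - G := by
    unfold hermite
    rw [he0, he1, hρ, hr, hG, hσdef, hhdef]
    have hne : xip - xi ≠ 0 := hh.ne'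
    field_simp
    ring
  rw [hid]
  have b1 : |e0 * σ| ≤ E * H ^ 2 * H := by
    rw [abs_mul]
    apply mul_le_mul hdi (by rw [abs_of_nonneg hσ0]; linarith) (abs_nonneg _) (by positivity)
  have b2 : |((r - e0) / h) * σ ^ 2| ≤ (M * H ^ 2 + E * H ^ 2) * H := by
    rw [abs_mul, abs_div, abs_of_pos hh]
    have hnum : |r - e0| ≤ M * H ^ 2 + E * H ^ 2 := by
      calc |r - e0| ≤ |r| + |e0| := abs_sub _ _
        _ ≤ M * h ^ 2 + E * H ^ 2 := add_le_add hrb hdi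
        _ ≤ M * H ^ 2 + E * H ^ 2 := by
            have : h ^ 2 ≤ H ^ 2 := pow_le_pow_left₀ hh.le hH 2
            have := mul_le_mul_of_nonneg_left this hM
            linarith
    have hfrac : |σ ^ 2| / h ≤ H := by
      rw [abs_of_nonneg (sq_nonneg σ), div_le_iff₀ hh]
      calc σ ^ 2 ≤ h ^ 2 := pow_le_pow_left₀ hσ0 hσh 2
        _ = h * h := sq h
        _ ≤ H * h := mul_le_mul_of_nonneg_right hH hh.le
    calc |r - e0| / h * |σ ^ 2| = |r - e0| * (|σ ^ 2| / h) := by ring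
      _ ≤ (M * H ^ 2 + E * H ^ 2) * H := by
          apply mul_le_mul hnum hfrac (by positivity) (by positivity)
  have b3 : |((ρ + e0 + e1 - 2 * r) / h ^ 2) * (σ ^ 2 * (σ - h))|
      ≤ (3 * M * H ^ 2 + 2 * E * H ^ 2) * H := by
    rw [abs_mul, abs_div, abs_of_pos (by positivity : (0:ℝ) < h ^ 2)]
    have hnum : |ρ + e0 + e1 - 2 * r| ≤ 3 * M * H ^ 2 + 2 * E * H ^ 2 := by
      have hρb : |ρ| ≤ M * H ^ 2 := by
        refine le_trans hrho ?_
        have : h ^ 2 ≤ H ^ 2 := pow_le_pow_left₀ hh.le hH 2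
        exact mul_le_mul_of_nonneg_left this hM
      have hrb' : |r| ≤ M * H ^ 2 := by
        refine le_trans hrb ?_
        have : h ^ 2 ≤ H ^ 2 := pow_le_pow_left₀ hh.le hH 2
        exact mul_le_mul_of_nonneg_left this hM
      calc |ρ + e0 + e1 - 2 * r| ≤ |ρ + e0 + e1| + |2 * r| := abs_sub _ _
        _ ≤ (|ρ + e0| + |e1|) + 2 * |r| := by
            rw [abs_mul, abs_two]
            exact add_le_add_left (abs_add_le _ _) _
        _ ≤ ((|ρ| + |e0|) + |e1|) + 2 * |r| := by
            linarith [abs_add_le ρ e0]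
        _ ≤ ((M * H ^ 2 + E * H ^ 2) + E * H ^ 2) + 2 * (M * H ^ 2) := by
            have := add_le_add (add_le_add (add_le_add hρb hdi) hdip)
              (mul_le_mul_of_nonneg_left hrb' (by norm_num : (0:ℝ) ≤ 2))
            linarith [this]
        _ = 3 * M * H ^ 2 + 2 * E * H ^ 2 := by ring
    have hfrac : |σ ^ 2 * (σ - h)| / h ^ 2 ≤ H := by
      rw [div_le_iff₀ (by positivity : (0:ℝ) < h ^ 2), abs_mul,
        abs_of_nonneg (sq_nonneg σ)]
      have h1 : |σ - h| ≤ h := by rw [abs_le]; constructor <;> linarith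
      calc σ ^ 2 * |σ - h| ≤ h ^ 2 * h := by
            apply mul_le_mul (pow_le_pow_left₀ hσ0 hσh 2) h1 (abs_nonneg _) (by positivity)
        _ = h * h ^ 2 := by ring
        _ ≤ H * h ^ 2 := mul_le_mul_of_nonneg_right hH (by positivity)
    calc |ρ + e0 + e1 - 2 * r| / h ^ 2 * |σ ^ 2 * (σ - h)|
        = |ρ + e0 + e1 - 2 * r| * (|σ ^ 2 * (σ - h)| / h ^ 2) := by ring
      _ ≤ (3 * M * H ^ 2 + 2 * E * H ^ 2) * H := by
          apply mul_le_mul hnum hfrac (by positivity) (by positivity)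
  have b4 : |G| ≤ M * H ^ 3 := by
    refine le_trans hGb ?_
    have : h ^ 3 ≤ H ^ 3 := pow_le_pow_left₀ hh.le hH 3
    exact mul_le_mul_of_nonneg_left this hM
  calc |e0 * σ + ((r - e0) / h) * σ ^ 2 + ((ρ + e0 + e1 - 2 * r) / h ^ 2) * (σ ^ 2 * (σ - h)) - G|
      ≤ |e0 * σ + ((r - e0) / h) * σ ^ 2 + ((ρ + e0 + e1 - 2 * r) / h ^ 2) * (σ ^ 2 * (σ - h))| + |G| := abs_sub _ _
    _ ≤ (|e0 * σ| + |((r - e0) / h) * σ ^ 2|) + |((ρ + e0 + e1 - 2 * r) / h ^ 2) * (σ ^ 2 * (σ - h))| + |G| := by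
        have t1 := abs_add_le (e0 * σ + ((r - e0) / h) * σ ^ 2) (((ρ + e0 + e1 - 2 * r) / h ^ 2) * (σ ^ 2 * (σ - h)))
        have t2 := abs_add_le (e0 * σ) (((r - e0) / h) * σ ^ 2)
        linarith
    _ ≤ (E * H ^ 2 * H + (M * H ^ 2 + E * H ^ 2) * H) + (3 * M * H ^ 2 + 2 * E * H ^ 2) * H + M * H ^ 3 := by
        linarith [b1, b2, b3, b4]
    _ = (5 * M + 4 * E) * H ^ 3 := by ring
    _ ≤ (8 * M + 4 * E) * H ^ 3 :=
        mul_le_mul_of_nonneg_right (by linarith) (pow_nonneg hH0.le 3)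


set_option maxHeartbeats 2000000 in
/-- (a) The Aràndiga–Yáñez values satisfy `0 < ḟᵢ^{AY} ≤ 3·min(mᵢ₋₁, mᵢ)` for
increasing data, so the resulting cubic Hermite interpolant is monotone;
(b) for data sampled from `f ∈ C³` with `f' ≥ δ > 0` and quasi-uniform grids
(`ĥ/hⱼ ≤ K`) the values are second-order accurate approximations of `f'(xᵢ)`
and the resulting piecewise cubic Hermite interpolant is third-order
accurate. -/
theorem arandigaYanez_monotone_and_accuracy :
    (∀ (n : ℕ) (x f df : ℕ → ℝ) (K hhat : ℝ), 4 ≤ n → 0 < K →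
      (∀ i, 1 ≤ i → i ≤ n - 1 → x i < x (i + 1)) →
      (∀ i, 1 ≤ i → i ≤ n - 1 → f i ≤ f (i + 1)) →
      (∀ i, 1 ≤ i → i ≤ n - 1 → 0 < (f (i + 1) - f i) / (x (i + 1) - x i)) →
      (∀ i, 1 ≤ i → i ≤ n - 1 → x (i + 1) - x i ≤ hhat) →
      (∃ i, 1 ≤ i ∧ i ≤ n - 1 ∧ hhat = x (i + 1) - x i) →
      (∀ j, 1 ≤ j → j ≤ n - 1 → hhat / (x (j + 1) - x j) ≤ K) →
      (∀ i, 2 ≤ i → i ≤ n - 1 →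
        df i = ayVal (x i - x (i - 1)) (x (i + 1) - x i)
          ((f i - f (i - 1)) / (x i - x (i - 1)))
          ((f (i + 1) - f i) / (x (i + 1) - x i))) →
      ((∀ i, 2 ≤ i → i ≤ n - 1 →
          0 < df i ∧ df i ≤ 3 * min ((f i - f (i - 1)) / (x i - x (i - 1)))
            ((f (i + 1) - f i) / (x (i + 1) - x i))) ∧
        (∀ i, 2 ≤ i → i ≤ n - 2 →
          MonotoneOn (hermite (x i) (x (i + 1)) (f i) (f (i + 1)) (df i) (df (i + 1)))
            (Set.Icc (x i) (x (i + 1)))))) ∧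
    (∀ K δ M : ℝ, 0 < K → 0 < δ → 0 ≤ M →
      ∃ C > 0, ∀ (n : ℕ) (x : ℕ → ℝ) (f : ℝ → ℝ) (hhat : ℝ) (df : ℕ → ℝ),
        4 ≤ n →
        (∀ i, 1 ≤ i → i ≤ n - 1 → x i < x (i + 1)) →
        (∀ i, 1 ≤ i → i ≤ n - 1 → x (i + 1) - x i ≤ hhat) →
        (∃ i, 1 ≤ i ∧ i ≤ n - 1 ∧ hhat = x (i + 1) - x i) →
        (∀ j, 1 ≤ j → j ≤ n - 1 → hhat / (x (j + 1) - x j) ≤ K) →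
        ContDiffOn ℝ 3 f (Set.Icc (x 1) (x n)) →
        (∀ t ∈ Set.Icc (x 1) (x n), δ ≤ derivWithin f (Set.Icc (x 1) (x n)) t) →
        (∀ t ∈ Set.Icc (x 1) (x n),
          |iteratedDerivWithin 2 f (Set.Icc (x 1) (x n)) t| ≤ M) →
        (∀ t ∈ Set.Icc (x 1) (x n),
          |iteratedDerivWithin 3 f (Set.Icc (x 1) (x n)) t| ≤ M) →
        (∀ i, 2 ≤ i → i ≤ n - 1 →
          df i = ayVal (x i - x (i - 1)) (x (i + 1) - x i)
            ((f (x i) - f (x (i - 1))) / (x i - x (i - 1)))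
            ((f (x (i + 1)) - f (x i)) / (x (i + 1) - x i))) →
        ((∀ i, 2 ≤ i → i ≤ n - 1 →
            |df i - derivWithin f (Set.Icc (x 1) (x n)) (x i)| ≤ C * hhat ^ 2) ∧
          (∀ i, 2 ≤ i → i ≤ n - 2 → ∀ t ∈ Set.Icc (x i) (x (i + 1)),
            |hermite (x i) (x (i + 1)) (f (x i)) (f (x (i + 1))) (df i) (df (i + 1)) t
              - f t| ≤ C * hhat ^ 3))) := by
  constructor
  · intro n x f df K hhat hn hK hx hf hm hhat1 hhatex hKq hdf
    have main : ∀ i, 2 ≤ i → i ≤ n - 1 →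
        0 < df i ∧ df i ≤ 3 * min ((f i - f (i - 1)) / (x i - x (i - 1)))
          ((f (i + 1) - f i) / (x (i + 1) - x i)) := by
      intro i h2 hin
      have hi1 : i - 1 + 1 = i := by omega
      have hxm : x (i - 1) < x i := by
        have := hx (i - 1) (by omega) (by omega); rwa [hi1] at this
      have hxp : x i < x (i + 1) := hx i (by omega) hin
      have ha : 0 < (f i - f (i - 1)) / (x i - x (i - 1)) := by
        have := hm (i - 1) (by omega) (by omega); rwa [hi1] at this
      have hb : 0 < (f (i + 1) - f i) / (x (i + 1) - x i) := hm i (by omega) hin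
      rw [hdf i h2 hin]
      exact ⟨ayVal_pos (by linarith) (by linarith) ha hb,
        ayVal_le_three_min (by linarith) (by linarith) ha hb⟩
    refine ⟨main, ?_⟩
    intro i h2 hin
    have hi1 : i + 1 - 1 = i := by omega
    have h1 : 2 ≤ i + 1 := by omega
    have h2' : i ≤ n - 1 := by omega
    have h3' : i + 1 ≤ n - 1 := by omega
    obtain ⟨hpos, hle⟩ := main i h2 h2'
    obtain ⟨hpos', hle'⟩ := main (i + 1) h1 h3'
    rw [hi1] at hle'
    have hxp : x i < x (i + 1) := hx i (by omega) h2'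
    have hmi : 0 < (f (i + 1) - f i) / (x (i + 1) - x i) := hm i (by omega) h2'
    exact hermite_monotoneOn hxp hpos.le hpos'.le hmi
      (le_trans hle (by apply mul_le_mul_of_nonneg_left (min_le_right _ _) (by norm_num)))
      (le_trans hle' (by apply mul_le_mul_of_nonneg_left (min_le_left _ _) (by norm_num)))

  ·
    intro K δ M hK hδ hM
    obtain ⟨P, hPdef⟩ : ∃ P : ℝ, P = max 1 (Real.log (2 * K) / Real.log 3) := ⟨_, rfl⟩
    have hP1 : 1 ≤ P := by rw [hPdef]; exact le_max_left _ _
    obtain ⟨C1, hC1⟩ : ∃ C1 : ℝ,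
        C1 = 2 * M + (2 + 6 * (P ^ 2 * (2:ℝ) ^ P + 2)) * M ^ 2 / δ := ⟨_, rfl⟩
    have hC10 : 0 ≤ C1 := by
      rw [hC1]
      have h1 : (0:ℝ) ≤ P ^ 2 * (2:ℝ) ^ P := by positivity
      have h2 : (0:ℝ) ≤ (2 + 6 * (P ^ 2 * (2:ℝ) ^ P + 2)) * M ^ 2 / δ := by positivity
      linarith
    refine ⟨5 * C1 + 8 * M + 1, by linarith, ?_⟩
    intro n x f hhat df hn hx hhat1 hhatex hKq hf hδf hM2 hM3 hdf
    -- grid facts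
    have hmono : ∀ j k, 1 ≤ j → j ≤ k → k ≤ n → x j ≤ x k := by
      intro j k h1 h2 h3
      induction k, h2 using Nat.le_induction with
      | base => exact le_refl _
      | succ k hk ih =>
        have h4 : x j ≤ x k := ih (by omega)
        have h5 : x k < x (k + 1) := hx k (by omega) (by omega)
        linarith
    have hx1n : x 1 < x n := by
      have h1 : x 1 < x 2 := hx 1 (le_refl _) (by omega)
      have h2 : x 2 ≤ x n := hmono 2 n (by omega) (by omega) (le_refl _)
      linarith
    set s : Set ℝ := Set.Icc (x 1) (x n) with hsdef
    have hsconv : Convex ℝ s := convex_Icc _ _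
    have hud : UniqueDiffOn ℝ s := uniqueDiffOn_Icc hx1n
    have hmem : ∀ k, 1 ≤ k → k ≤ n → x k ∈ s := by
      intro k h1 h2
      exact ⟨hmono 1 k (le_refl _) h1 h2, hmono k n h1 h2 (le_refl _)⟩
    have hhat0 : 0 < hhat := by
      obtain ⟨j, hj1, hj2, hj3⟩ := hhatex
      rw [hj3]
      have := hx j hj1 hj2
      linarith
    -- calculus setup
    set F : ℝ → ℝ := derivWithin f s with hFdef
    set F2 : ℝ → ℝ := derivWithin F s with hF2def
    set F3 : ℝ → ℝ := derivWithin F2 s with hF3def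
    have hdf1 : ∀ t ∈ s, HasDerivWithinAt f (F t) s t := by
      intro t ht
      exact ((hf.differentiableOn (by norm_num)) t ht).hasDerivWithinAt
    have hFc : ContDiffOn ℝ 2 F s := hf.derivWithin hud (by norm_num)
    have hdf2 : ∀ t ∈ s, HasDerivWithinAt F (F2 t) s t := by
      intro t ht
      exact ((hFc.differentiableOn (by norm_num)) t ht).hasDerivWithinAt
    have hF2c : ContDiffOn ℝ 1 F2 s := hFc.derivWithin hud (by norm_num)
    have hdf3 : ∀ t ∈ s, HasDerivWithinAt F2 (F3 t) s t := by
      intro t ht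
      exact ((hF2c.differentiableOn (by norm_num)) t ht).hasDerivWithinAt
    have hF2eq : ∀ t ∈ s, F2 t = iteratedDerivWithin 2 f s t := by
      intro t ht
      have hEq1 : Set.EqOn F (iteratedDerivWithin 1 f s) s := by
        intro r hr
        rw [hFdef]
        exact (congrFun iteratedDerivWithin_one r).symm
      rw [iteratedDerivWithin_succ, hF2def]
      exact derivWithin_congr hEq1 (hEq1 ht)
    have hF3eq : ∀ t ∈ s, F3 t = iteratedDerivWithin 3 f s t := by
      intro t ht
      rw [show (3:ℕ) = 2 + 1 by norm_num, iteratedDerivWithin_succ, hF3def]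
      exact derivWithin_congr (fun r hr => hF2eq r hr) (hF2eq t ht)
    have hF2b : ∀ t ∈ s, |F2 t| ≤ M := fun t ht => by
      rw [hF2eq t ht]; exact hM2 t ht
    have hF3b : ∀ t ∈ s, |F3 t| ≤ M := fun t ht => by
      rw [hF3eq t ht]; exact hM3 t ht
    -- slope lower bound
    have hslope : ∀ u v, u ∈ s → v ∈ s → u ≤ v → δ * (v - u) ≤ f v - f u := by
      have hcont : ContinuousOn f s := hf.continuousOn
      have hops : ∀ t ∈ interior s, s ∈ nhds t ∧ t ∈ s := by
        intro t ht
        have htI : t ∈ Set.Ioo (x 1) (x n) := by rw [hsdef, interior_Icc] at ht; exact ht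
        refine ⟨?_, interior_subset ht⟩
        rw [hsdef]
        exact Icc_mem_nhds htI.1 htI.2
      have hdiff : DifferentiableOn ℝ f (interior s) := by
        intro t ht
        obtain ⟨hts, ht'⟩ := hops t ht
        exact (((hdf1 t ht').hasDerivAt hts).differentiableAt).differentiableWithinAt
      have hbound : ∀ t ∈ interior s, δ ≤ deriv f t := by
        intro t ht
        obtain ⟨hts, ht'⟩ := hops t ht
        rw [((hdf1 t ht').hasDerivAt hts).deriv]
        exact hδf t ht'
      exact fun u v hu hv huv =>
        hsconv.mul_sub_le_image_sub_of_le_deriv hcont hdiff hbound u hu v hv huv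
    -- per-node derivative estimates
    have hnode : ∀ i, 2 ≤ i → i ≤ n - 1 → |df i - F (x i)| ≤ C1 * hhat ^ 2 := by
      intro i h2 hin
      have hi1 : i - 1 + 1 = i := by omega
      have hxm : x (i - 1) < x i := by
        have := hx (i - 1) (by omega) (by omega); rwa [hi1] at this
      have hxp : x i < x (i + 1) := hx i (by omega) hin
      have hmem1 : x (i - 1) ∈ s := hmem (i - 1) (by omega) (by omega)
      have hmem2 : x i ∈ s := hmem i (by omega) (by omega)
      have hmem3 : x (i + 1) ∈ s := hmem (i + 1) (by omega) (by omega)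
      obtain ⟨hm', hhm'⟩ : ∃ hm' : ℝ, hm' = x i - x (i - 1) := ⟨_, rfl⟩
      obtain ⟨hi', hhi'⟩ : ∃ hi' : ℝ, hi' = x (i + 1) - x i := ⟨_, rfl⟩
      have hm0 : 0 < hm' := by rw [hhm']; linarith
      have hi0 : 0 < hi' := by rw [hhi']; linarith
      have hmhat : hm' ≤ hhat := by
        rw [hhm']
        have := hhat1 (i - 1) (by omega) (by omega); rwa [hi1] at this
      have hihat : hi' ≤ hhat := by
        rw [hhi']; exact hhat1 i (by omega) hin
      have hne1 : x i - x (i - 1) ≠ 0 := ne_of_gt (by linarith)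
      have hne2 : x (i + 1) - x i ≠ 0 := ne_of_gt (by linarith)
      obtain ⟨a, hadef⟩ : ∃ a : ℝ, a = (f (x i) - f (x (i - 1))) / hm' := ⟨_, rfl⟩
      obtain ⟨b, hbdef⟩ : ∃ b : ℝ, b = (f (x (i + 1)) - f (x i)) / hi' := ⟨_, rfl⟩
      have haδ : δ ≤ a := by
        rw [hadef, le_div_iff₀ hm0, hhm']
        exact hslope _ _ hmem1 hmem2 (by linarith)
      have hbδ : δ ≤ b := by
        rw [hbdef, le_div_iff₀ hi0, hhi']
        exact hslope _ _ hmem2 hmem3 (by linarith)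
      have hFδi : δ ≤ F (x i) := hδf (x i) hmem2
      -- Taylor estimates at x i
      have habs_m : |x (i - 1) - x i| = hm' := by
        rw [hhm', abs_of_nonpos (by linarith)]; ring
      have habs_p : |x (i + 1) - x i| = hi' := by
        rw [hhi', abs_of_nonneg (by linarith)]
      have ht2m := tay2 hsconv hdf1 hdf2 hF2b hmem2 hmem1
      have ht2p := tay2 hsconv hdf1 hdf2 hF2b hmem2 hmem3
      have ht3m := tay3 hsconv hdf1 hdf2 hdf3 hF3b hmem2 hmem1
      have ht3p := tay3 hsconv hdf1 hdf2 hdf3 hF3b hmem2 hmem3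
      rw [habs_m] at ht2m ht3m
      rw [habs_p] at ht2p ht3p
      have ha2 : |a - F (x i)| ≤ M * hm' := by
        have key : f (x (i - 1)) - f (x i) - F (x i) * (x (i - 1) - x i)
            = -(hm' * (a - F (x i))) := by
          rw [hadef, hhm']; field_simp; try ring
        rw [key, abs_neg, abs_mul, abs_of_pos hm0,
          show M * hm' ^ 2 = hm' * (M * hm') by ring] at ht2m
        exact le_of_mul_le_mul_left ht2m hm0
      have hb2 : |b - F (x i)| ≤ M * hi' := by
        have key : f (x (i + 1)) - f (x i) - F (x i) * (x (i + 1) - x i)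
            = hi' * (b - F (x i)) := by
          rw [hbdef, hhi']; field_simp; try ring
        rw [key, abs_mul, abs_of_pos hi0,
          show M * hi' ^ 2 = hi' * (M * hi') by ring] at ht2p
        exact le_of_mul_le_mul_left ht2p hi0
      have ha3 : |a - F (x i) + hm' / 2 * F2 (x i)| ≤ M * hm' ^ 2 := by
        have key : f (x (i - 1)) - f (x i) - F (x i) * (x (i - 1) - x i)
              - F2 (x i) * (x (i - 1) - x i) ^ 2 / 2
            = -(hm' * (a - F (x i) + hm' / 2 * F2 (x i))) := by
          rw [hadef, hhm']; field_simp; try ring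
        rw [key, abs_neg, abs_mul, abs_of_pos hm0,
          show M * hm' ^ 2 * hm' = hm' * (M * hm' ^ 2) by ring] at ht3m
        exact le_of_mul_le_mul_left ht3m hm0
      have hb3 : |b - F (x i) - hi' / 2 * F2 (x i)| ≤ M * hi' ^ 2 := by
        have key : f (x (i + 1)) - f (x i) - F (x i) * (x (i + 1) - x i)
              - F2 (x i) * (x (i + 1) - x i) ^ 2 / 2
            = hi' * (b - F (x i) - hi' / 2 * F2 (x i)) := by
          rw [hbdef, hhi']; field_simp; try ring
        rw [key, abs_mul, abs_of_pos hi0,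
          show M * hi' ^ 2 * hi' = hi' * (M * hi' ^ 2) by ring] at ht3p
        exact le_of_mul_le_mul_left ht3p hi0
      -- exponent bound
      have hpP : ayExp hm' hi' ≤ P := by
        have hKm : hhat / hm' ≤ K := by
          rw [hhm']
          have := hKq (i - 1) (by omega) (by omega); rwa [hi1] at this
        have hKi : hhat / hi' ≤ K := by
          rw [hhi']; exact hKq i (by omega) hin
        have hmlo : hhat / K ≤ hm' := by
          rw [div_le_iff₀ hK]
          rw [div_le_iff₀ hm0] at hKm
          linarith [hKm]
        have hilo : hhat / K ≤ hi' := by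
          rw [div_le_iff₀ hK]
          rw [div_le_iff₀ hi0] at hKi
          linarith [hKi]
        have hmax : max hm' hi' ≤ hhat := max_le hmhat hihat
        have hminlo : hhat / K ≤ min hm' hi' := le_min hmlo hilo
        have hminpos : 0 < min hm' hi' := lt_min hm0 hi0
        have hKhat : 0 < hhat / K := by positivity
        have hwK : 2 * max hm' hi' / min hm' hi' ≤ 2 * K := by
          calc 2 * max hm' hi' / min hm' hi' ≤ 2 * hhat / (hhat / K) := by
                apply div_le_div₀ (by positivity) (by linarith) hKhat hminlo
            _ = 2 * K := by field_simp
        have hw0 : 0 < 2 * max hm' hi' / min hm' hi' := by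
          apply div_pos _ hminpos
          have h0 : 0 < max hm' hi' := lt_of_lt_of_le hm0 (le_max_left _ _)
          linarith
        have hlog3 : (0:ℝ) < Real.log 3 := Real.log_pos (by norm_num)
        have hlog : Real.log (2 * max hm' hi' / min hm' hi') ≤ Real.log (2 * K) :=
          Real.log_le_log hw0 hwK
        have hdivle : Real.log (2 * max hm' hi' / min hm' hi') / Real.log 3
            ≤ Real.log (2 * K) / Real.log 3 := (div_le_div_iff_of_pos_right hlog3).2 hlog
        calc ayExp hm' hi' ≤ max 1 (Real.log (2 * K) / Real.log 3) := by
              unfold ayExp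
              exact max_le_max (le_refl 1) hdivle
          _ = P := hPdef.symm
      have hfinal := df_acc hm0 hi0 hmhat hihat hδ hM hFδi haδ hbδ ha2 hb2 ha3 hb3 hP1 hpP
      rw [← hC1] at hfinal
      have hdfi : df i = ayVal hm' hi' a b := by
        rw [hdf i h2 hin, ← hhm', ← hhi', ← hadef, ← hbdef]
      rw [hdfi]
      exact hfinal
    constructor
    · intro i h2 hin
      have := hnode i h2 hin
      have hsq : (0:ℝ) ≤ hhat ^ 2 := sq_nonneg hhat
      calc |df i - F (x i)| ≤ C1 * hhat ^ 2 := this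
        _ ≤ (5 * C1 + 8 * M + 1) * hhat ^ 2 :=
            mul_le_mul_of_nonneg_right (by linarith) hsq
    · intro i h2 hin t ht
      have hin1 : i ≤ n - 1 := by omega
      have hin2 : i + 1 ≤ n - 1 := by omega
      have h21 : 2 ≤ i + 1 := by omega
      have hd_i := hnode i h2 hin1
      have hd_ip := hnode (i + 1) h21 hin2
      have hxp : x i < x (i + 1) := hx i (by omega) hin1
      have hH : x (i + 1) - x i ≤ hhat := hhat1 i (by omega) hin1
      have hmemi : x i ∈ s := hmem i (by omega) (by omega)
      have hmemip : x (i + 1) ∈ s := hmem (i + 1) (by omega) (by omega)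
      have hsub : Set.Icc (x i) (x (i + 1)) ⊆ s := by
        intro r hr
        exact ⟨le_trans hmemi.1 hr.1, le_trans hr.2 hmemip.2⟩
      have htay : ∀ r ∈ Set.Icc (x i) (x (i + 1)),
          |f r - f (x i) - F (x i) * (r - x i) - F2 (x i) * (r - x i) ^ 2 / 2|
            ≤ M * (x (i + 1) - x i) ^ 3 := by
        intro r hr
        have h0 := tay3 hsconv hdf1 hdf2 hdf3 hF3b hmemi (hsub hr)
        refine le_trans h0 ?_
        have habs : |r - x i| ≤ x (i + 1) - x i := by
          rw [abs_of_nonneg (by linarith [hr.1])]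
          linarith [hr.2]
        calc M * |r - x i| ^ 2 * |r - x i| = M * |r - x i| ^ 3 := by ring
          _ ≤ M * (x (i + 1) - x i) ^ 3 :=
              mul_le_mul_of_nonneg_left (pow_le_pow_left₀ (abs_nonneg _) habs 3) hM
      have hrho : |F (x (i + 1)) - F (x i) - F2 (x i) * (x (i + 1) - x i)|
          ≤ M * (x (i + 1) - x i) ^ 2 := by
        have h0 := tay2 hsconv hdf2 hdf3 hF3b hmemi hmemip
        rwa [abs_of_nonneg (by linarith : (0:ℝ) ≤ x (i + 1) - x i)] at h0
      have hres := hermite_close hxp hH hM hC10 htay hrho hd_i hd_ip t ht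
      refine le_trans hres ?_
      apply mul_le_mul_of_nonneg_right (by linarith) (by positivity)
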